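/- Let H : ℝ^d × ℝ^d → ℝ be continuously differentiable, let S be a skew-symmetric 2d×2d real matrix, and suppose (p^{n+1}, q^{n+1}) satisfies the partitioned AVF update: (1/τ)((p^{n+1}-p^n), (q^{n+1}-q^n)) = S · (∫₀¹ H_p(ξp^{n+1}+(1-ξ)p^n, q^n) dξ, ∫₀¹ H_q(p^{n+1}, ξq^{n+1}+(1-ξ)q^n) dξ) with τ ≠ 0. Then H(p^{n+1}, q^{n+1}) = H(p^n, q^n). -/

import Mathlib

open MeasureTheory

private lemma ftc_line {E : Type*} [NormedAddCommGroup E] [NormedSpace ℝ E]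
    (H : E → ℝ) (hH : ContDiff ℝ 1 H) (z0 z1 : E) :
    H z1 - H z0 = ∫ ξ in (0:ℝ)..1, fderiv ℝ H (ξ • z1 + (1 - ξ) • z0) (z1 - z0) := by
  have hγ : ∀ ξ : ℝ, HasDerivAt (fun t : ℝ => t • z1 + (1 - t) • z0) (z1 - z0) ξ := by
    intro ξ
    have h1 : HasDerivAt (fun t : ℝ => t • z1) ((1:ℝ) • z1) ξ := (hasDerivAt_id ξ).smul_const z1
    have h0 : HasDerivAt (fun t : ℝ => 1 - t) (-1) ξ := by
      simpa using (hasDerivAt_id ξ).const_sub (1:ℝ)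
    have h2 : HasDerivAt (fun t : ℝ => (1 - t) • z0) ((-1:ℝ) • z0) ξ := h0.smul_const z0
    have := h1.add h2
    simpa [sub_eq_add_neg, Pi.add_def] using this
  have hcont : Continuous fun ξ : ℝ => fderiv ℝ H (ξ • z1 + (1 - ξ) • z0) (z1 - z0) := by
    have hγc : Continuous fun ξ : ℝ => ξ • z1 + (1 - ξ) • z0 := by continuity
    exact ((hH.continuous_fderiv one_ne_zero).comp hγc).clm_apply continuous_const
  have := intervalIntegral.integral_eq_sub_of_hasDerivAt
    (f := fun t : ℝ => H (t • z1 + (1 - t) • z0))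
    (f' := fun t => fderiv ℝ H (t • z1 + (1 - t) • z0) (z1 - z0))
    (fun t _ => ((hH.differentiable one_ne_zero).differentiableAt.hasFDerivAt).comp_hasDerivAt t (hγ t))
    (hcont.intervalIntegrable 0 1)
  simpa using this.symm

theorem pavf_energy_preservation {d : ℕ}
    (H : (Fin d → ℝ) × (Fin d → ℝ) → ℝ) (hH : ContDiff ℝ 1 H)
    (Hp Hq : (Fin d → ℝ) → (Fin d → ℝ) → (Fin d → ℝ))
    (hHp : ∀ p q i, Hp p q i = fderiv ℝ H (p, q) (Pi.single i 1, 0))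
    (hHq : ∀ p q i, Hq p q i = fderiv ℝ H (p, q) (0, Pi.single i 1))
    (S : Matrix ((Fin d) ⊕ (Fin d)) ((Fin d) ⊕ (Fin d)) ℝ)
    (hS : S.transpose = -S)
    (τ : ℝ) (hτ : τ ≠ 0)
    (p0 p1 q0 q1 : Fin d → ℝ)
    (hupdate : ∀ j, τ⁻¹ • (Sum.elim (p1 - p0) (q1 - q0)) j =
      S.mulVec (Sum.elim
        (fun i => ∫ ξ in (0:ℝ)..1, Hp (ξ • p1 + (1 - ξ) • p0) q0 i)
        (fun i => ∫ ξ in (0:ℝ)..1, Hq p1 (ξ • q1 + (1 - ξ) • q0) i)) j) :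
    H (p1, q1) = H (p0, q0) := by
  classical
  set v : (Fin d ⊕ Fin d) → ℝ := Sum.elim
      (fun i => ∫ ξ in (0:ℝ)..1, Hp (ξ • p1 + (1 - ξ) • p0) q0 i)
      (fun i => ∫ ξ in (0:ℝ)..1, Hq p1 (ξ • q1 + (1 - ξ) • q0) i) with hv
  -- continuity of integrands
  have hfd : Continuous fun z : (Fin d → ℝ) × (Fin d → ℝ) => fderiv ℝ H z :=
    hH.continuous_fderiv one_ne_zero
  -- Step A : p-step
  have stepA : H (p1, q0) - H (p0, q0) = ∑ i, (p1 - p0) i * v (Sum.inl i) := by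
    have h := ftc_line H hH (p0, q0) (p1, q0)
    have hpoint : ∀ ξ : ℝ,
        (ξ • ((p1, q0) : (Fin d → ℝ) × (Fin d → ℝ)) + (1 - ξ) • (p0, q0))
          = (ξ • p1 + (1 - ξ) • p0, q0) := by
      intro ξ
      have : ξ • q0 + (1 - ξ) • q0 = q0 := by module
      simp [Prod.smul_def, Prod.ext_iff, this]
    have hdecomp : (((p1, q0) : (Fin d → ℝ) × (Fin d → ℝ)) - (p0, q0)) =
        ∑ i, (p1 - p0) i • ((Pi.single i 1 : Fin d → ℝ), (0 : Fin d → ℝ)) := by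
      refine Prod.ext ?_ ?_
      · simp only [Prod.fst_sub, Finset.sum_apply, Prod.smul_mk, Prod.fst_sum]
        funext j
        simp [Finset.sum_apply, Pi.single_apply, mul_ite]
      · simp [Prod.snd_sum]
    have hintg : ∀ ξ : ℝ,
        fderiv ℝ H (ξ • ((p1, q0) : (Fin d → ℝ) × (Fin d → ℝ)) + (1 - ξ) • (p0, q0))
          (((p1, q0) : (Fin d → ℝ) × (Fin d → ℝ)) - (p0, q0)) =
        ∑ i, (p1 - p0) i * Hp (ξ • p1 + (1 - ξ) • p0) q0 i := by
      intro ξ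
      rw [hpoint ξ, hdecomp, map_sum]
      refine Finset.sum_congr rfl fun i _ => ?_
      simp only [_root_.map_smul, smul_eq_mul, hHp, Pi.sub_apply]
    have hconti : ∀ i : Fin d, Continuous fun ξ : ℝ => Hp (ξ • p1 + (1 - ξ) • p0) q0 i := by
      intro i
      have hpath : Continuous fun ξ : ℝ =>
          ((ξ • p1 + (1 - ξ) • p0, q0) : (Fin d → ℝ) × (Fin d → ℝ)) :=
        ((continuous_id.smul continuous_const).add
          ((continuous_const.sub continuous_id).smul continuous_const)).prodMk
          continuous_const
      have : Continuous fun ξ : ℝ =>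
          fderiv ℝ H (ξ • p1 + (1 - ξ) • p0, q0) ((Pi.single i 1 : Fin d → ℝ), (0:Fin d → ℝ)) :=
        (hfd.comp hpath).clm_apply continuous_const
      simpa [hHp] using this
    rw [h]
    rw [intervalIntegral.integral_congr (g := fun ξ =>
      ∑ i, (p1 - p0) i * Hp (ξ • p1 + (1 - ξ) • p0) q0 i) (fun ξ _ => hintg ξ)]
    rw [intervalIntegral.integral_finset_sum
      (f := fun i ξ => (p1 - p0) i * Hp (ξ • p1 + (1 - ξ) • p0) q0 i) (fun i _ =>
      ((continuous_const.mul (hconti i) : Continuous fun ξ : ℝ =>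
        (p1 - p0) i * Hp (ξ • p1 + (1 - ξ) • p0) q0 i).intervalIntegrable 0 1))]
    refine Finset.sum_congr rfl fun i _ => ?_
    rw [intervalIntegral.integral_const_mul]
    rfl
  -- Step B : q-step
  have stepB : H (p1, q1) - H (p1, q0) = ∑ i, (q1 - q0) i * v (Sum.inr i) := by
    have h := ftc_line H hH (p1, q0) (p1, q1)
    have hpoint : ∀ ξ : ℝ,
        (ξ • ((p1, q1) : (Fin d → ℝ) × (Fin d → ℝ)) + (1 - ξ) • (p1, q0))
          = (p1, ξ • q1 + (1 - ξ) • q0) := by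
      intro ξ
      have : ξ • p1 + (1 - ξ) • p1 = p1 := by module
      simp [Prod.smul_def, Prod.ext_iff, this]
    have hdecomp : (((p1, q1) : (Fin d → ℝ) × (Fin d → ℝ)) - (p1, q0)) =
        ∑ i, (q1 - q0) i • ((0 : Fin d → ℝ), (Pi.single i 1 : Fin d → ℝ)) := by
      refine Prod.ext ?_ ?_
      · simp [Prod.fst_sum]
      · simp only [Prod.snd_sub, Prod.smul_mk, Prod.snd_sum]
        funext j
        simp [Finset.sum_apply, Pi.single_apply, mul_ite]
    have hintg : ∀ ξ : ℝ,
        fderiv ℝ H (ξ • ((p1, q1) : (Fin d → ℝ) × (Fin d → ℝ)) + (1 - ξ) • (p1, q0))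
          (((p1, q1) : (Fin d → ℝ) × (Fin d → ℝ)) - (p1, q0)) =
        ∑ i, (q1 - q0) i * Hq p1 (ξ • q1 + (1 - ξ) • q0) i := by
      intro ξ
      rw [hpoint ξ, hdecomp, map_sum]
      refine Finset.sum_congr rfl fun i _ => ?_
      simp only [_root_.map_smul, smul_eq_mul, hHq, Pi.sub_apply]
    have hconti : ∀ i : Fin d, Continuous fun ξ : ℝ => Hq p1 (ξ • q1 + (1 - ξ) • q0) i := by
      intro i
      have hpath : Continuous fun ξ : ℝ =>
          ((p1, ξ • q1 + (1 - ξ) • q0) : (Fin d → ℝ) × (Fin d → ℝ)) :=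
        continuous_const.prodMk
          ((continuous_id.smul continuous_const).add
            ((continuous_const.sub continuous_id).smul continuous_const))
      have : Continuous fun ξ : ℝ =>
          fderiv ℝ H (p1, ξ • q1 + (1 - ξ) • q0) ((0:Fin d → ℝ), (Pi.single i 1 : Fin d → ℝ)) :=
        (hfd.comp hpath).clm_apply continuous_const
      simpa [hHq] using this
    rw [h]
    rw [intervalIntegral.integral_congr (g := fun ξ =>
      ∑ i, (q1 - q0) i * Hq p1 (ξ • q1 + (1 - ξ) • q0) i) (fun ξ _ => hintg ξ)]
    rw [intervalIntegral.integral_finset_sum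
      (f := fun i ξ => (q1 - q0) i * Hq p1 (ξ • q1 + (1 - ξ) • q0) i) (fun i _ =>
      ((continuous_const.mul (hconti i) : Continuous fun ξ : ℝ =>
        (q1 - q0) i * Hq p1 (ξ • q1 + (1 - ξ) • q0) i).intervalIntegrable 0 1))]
    refine Finset.sum_congr rfl fun i _ => ?_
    rw [intervalIntegral.integral_const_mul]
    rfl
  -- skew symmetry : v ⬝ᵥ S.mulVec v = 0
  have hskew : dotProduct v (S.mulVec v) = 0 := by
    have h1 : dotProduct v (S.mulVec v) = dotProduct (S.vecMul v) v :=
      Matrix.dotProduct_mulVec v S v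
    have h2 : S.vecMul v = -(S.mulVec v) := by
      rw [← Matrix.mulVec_transpose, hS, Matrix.neg_mulVec]
    rw [h2, neg_dotProduct] at h1
    have h3 : dotProduct (S.mulVec v) v = dotProduct v (S.mulVec v) :=
      dotProduct_comm _ _
    linarith
  -- update gives the dot product is zero
  have hdot : (∑ i, (p1 - p0) i * v (Sum.inl i)) + (∑ i, (q1 - q0) i * v (Sum.inr i)) = 0 := by
    have hΔ : ∀ j, (Sum.elim (p1 - p0) (q1 - q0)) j = τ * S.mulVec v j := by
      intro j
      have := hupdate j
      rw [smul_eq_mul] at this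
      field_simp at this
      linarith [this]
    have : dotProduct (Sum.elim (p1 - p0) (q1 - q0)) v
        = τ * dotProduct (S.mulVec v) v := by
      unfold dotProduct
      rw [Finset.mul_sum]
      exact Finset.sum_congr rfl fun j _ => by rw [hΔ j]; ring
    rw [dotProduct_comm (S.mulVec v) v, hskew, mul_zero] at this
    calc (∑ i, (p1 - p0) i * v (Sum.inl i)) + (∑ i, (q1 - q0) i * v (Sum.inr i))
        = dotProduct (Sum.elim (p1 - p0) (q1 - q0)) v := by
          rw [dotProduct, Fintype.sum_sum_type]
          simp
      _ = 0 := this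
  linarith [stepA, stepB, hdot]
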